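/- Let C be an additive code of length n over F4 and let a be a binary vector. Then C is an additive right polycyclic code induced by a if and only if the trace dual C^⊥ is an additive sequential code induced by a. -/

import Mathlib

open Polynomial

noncomputable section

abbrev F4 : Type := GaloisField 2 2

def IsBin (z : F4) : Prop := z = 0 ∨ z = 1

def IsBinVec {n : ℕ} (a : Fin n → F4) : Prop := ∀ i, IsBin (a i)

def IsBinPoly (p : Polynomial F4) : Prop := ∀ i, IsBin (p.coeff i)

def polyOfVec {n : ℕ} (c : Fin n → F4) : Polynomial F4 :=
  ∑ i : Fin n, Polynomial.C (c i) * X ^ (i : ℕ)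

def rightShift {n : ℕ} (a c : Fin n → F4) : Fin n → F4 := fun i =>
  (if (i : ℕ) = 0 then 0 else c ⟨(i : ℕ) - 1, lt_of_le_of_lt (Nat.sub_le _ _) i.isLt⟩)
    + c ⟨n - 1, Nat.sub_lt i.pos Nat.one_pos⟩ * a i

def leftShift {n : ℕ} (a c : Fin n → F4) : Fin n → F4 := fun i =>
  (if h : (i : ℕ) + 1 < n then c ⟨(i : ℕ) + 1, h⟩ else 0) + c ⟨0, i.pos⟩ * a i

def seqShift {n : ℕ} (a c : Fin n → F4) : Fin n → F4 := fun i =>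
  if h : (i : ℕ) + 1 < n then c ⟨(i : ℕ) + 1, h⟩ else ∑ j, a j * c j

def IsRightPolycyclic {n : ℕ} (a : Fin n → F4) (C : AddSubgroup (Fin n → F4)) : Prop :=
  ∀ c ∈ C, rightShift a c ∈ C

def IsLeftPolycyclic {n : ℕ} (a : Fin n → F4) (C : AddSubgroup (Fin n → F4)) : Prop :=
  ∀ c ∈ C, leftShift a c ∈ C

def quotMk {n : ℕ} (a : Fin n → F4) :
    Polynomial F4 →+* Polynomial F4 ⧸ Ideal.span {X ^ n - polyOfVec a} :=
  Ideal.Quotient.mk _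

def codeImage {n : ℕ} (a : Fin n → F4) (C : AddSubgroup (Fin n → F4)) :
    Set (Polynomial F4 ⧸ Ideal.span {X ^ n - polyOfVec a}) :=
  (fun c => quotMk a (polyOfVec c)) '' (C : Set (Fin n → F4))

/-- The trace dual of `C` with respect to the trace inner product
`⟨x, y⟩_T = Tr(Σ_i x_i y_i²)`, where `Tr(z) = z + z²`. -/
def traceDual {n : ℕ} (C : AddSubgroup (Fin n → F4)) : Set (Fin n → F4) :=
  {y | ∀ x ∈ C, (∑ i, x i * (y i) ^ 2) + (∑ i, x i * (y i) ^ 2) ^ 2 = 0}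

instance : Fact (Nat.Prime 2) := ⟨Nat.prime_two⟩

instance : Fintype F4 := Fintype.ofFinite _

lemma F4_card : Fintype.card F4 = 4 := by
  have := GaloisField.card 2 2 (by norm_num)
  simpa [Nat.card_eq_fintype_card] using this

lemma pow4 (z : F4) : z ^ 4 = z := by
  have := FiniteField.pow_card z
  rwa [F4_card] at this

lemma sq_add (s t : F4) : (s + t) ^ 2 = s ^ 2 + t ^ 2 := add_pow_char s t 2

def Tr (z : F4) : F4 := z + z ^ 2

lemma Tr_add (s t : F4) : Tr (s + t) = Tr s + Tr t := by
  simp only [Tr, sq_add]; ring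

lemma Tr_sq (z : F4) : Tr (z ^ 2) = Tr z := by
  have h4 : (z ^ 2) ^ 2 = z := by
    rw [← pow_mul]; exact pow4 z
  simp only [Tr, h4]; ring

lemma Tr_binary (z : F4) : Tr z = 0 ∨ Tr z = 1 := by
  have h : Tr z * (Tr z - 1) = 0 := by
    have h2 : Tr z ^ 2 = Tr z := by
      have h := Tr_sq z
      simp only [Tr] at h ⊢
      rw [sq_add]
      exact h
    linear_combination h2
  rcases mul_eq_zero.mp h with h | h
  · exact Or.inl h
  · exact Or.inr (by linear_combination h)

lemma two_eq_zero : (1 : F4) + 1 = 0 := by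
  have : (2 : F4) = 0 := by
    exact_mod_cast CharP.cast_eq_zero F4 2
  linear_combination this

open Classical in
def tr2 (z : F4) : ZMod 2 := if Tr z = 0 then 0 else 1

lemma tr2_eq_zero_iff {z : F4} : tr2 z = 0 ↔ Tr z = 0 := by
  unfold tr2
  split
  · simp [*]
  · simp [*]

lemma tr2_add (s t : F4) : tr2 (s + t) = tr2 s + tr2 t := by
  unfold tr2
  have hst := Tr_add s t
  rcases Tr_binary s with hs | hs <;> rcases Tr_binary t with ht | ht <;>
    rw [hs, ht] at hst <;>
    simp [hs, ht, hst, two_eq_zero, one_ne_zero] <;> decide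

lemma tr2_sq (z : F4) : tr2 (z ^ 2) = tr2 z := by
  unfold tr2; rw [Tr_sq]

lemma exists_tr_ne : ∃ g : F4, Tr g ≠ 0 := by
  by_contra h
  push_neg at h
  have hb : ∀ z : F4, z = 0 ∨ z = 1 := by
    intro z
    have hz := h z
    simp only [Tr] at hz
    have : z * (z - 1) = 0 := by
      have hneg : z ^ 2 = z := by
        -- z + z^2 = 0, char 2
        have : z ^ 2 = -z := by linear_combination hz
        rw [this]; exact (CharTwo.neg_eq z)
      linear_combination hneg
    rcases mul_eq_zero.mp this with h1 | h1
    · exact Or.inl h1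
    · exact Or.inr (by linear_combination h1)
  classical
  have hsub : (Finset.univ : Finset F4) ⊆ {0, 1} := by
    intro z _
    rcases hb z with rfl | rfl <;> simp
  have h1 := Finset.card_le_card hsub
  rw [Finset.card_univ, F4_card] at h1
  have h2 : ({0, 1} : Finset F4).card ≤ 2 :=
    le_trans (Finset.card_insert_le _ _) (by simp)
  omega

lemma zmod2_cases : ∀ c : ZMod 2, c = 0 ∨ c = 1 := by decide

lemma tr2_zero : tr2 0 = 0 := by
  rw [tr2_eq_zero_iff]; simp [Tr]

/-- The trace bilinear form over `ZMod 2`. -/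
def bform (n : ℕ) : LinearMap.BilinForm (ZMod 2) (Fin n → F4) :=
  LinearMap.mk₂' (ZMod 2) (ZMod 2) (fun x y => tr2 (∑ i, x i * y i ^ 2))
    (fun x x' y => by
      show tr2 (∑ i, (x + x') i * y i ^ 2)
          = tr2 (∑ i, x i * y i ^ 2) + tr2 (∑ i, x' i * y i ^ 2)
      rw [← tr2_add]
      congr 1
      rw [← Finset.sum_add_distrib]
      exact Finset.sum_congr rfl fun i _ => by
        rw [Pi.add_apply, add_mul])
    (fun c x y => by
      rcases zmod2_cases c with rfl | rfl
      · simp [tr2_zero]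
      · simp)
    (fun x y y' => by
      show tr2 (∑ i, x i * (y + y') i ^ 2)
          = tr2 (∑ i, x i * y i ^ 2) + tr2 (∑ i, x i * y' i ^ 2)
      rw [← tr2_add]
      congr 1
      rw [← Finset.sum_add_distrib]
      exact Finset.sum_congr rfl fun i _ => by
        rw [Pi.add_apply, sq_add, mul_add])
    (fun c x y => by
      rcases zmod2_cases c with rfl | rfl
      · simp [tr2_zero]
      · simp)

lemma bform_apply {n : ℕ} (x y : Fin n → F4) :
    bform n x y = tr2 (∑ i, x i * y i ^ 2) := rfl

lemma bform_symm {n : ℕ} (x y : Fin n → F4) : bform n x y = bform n y x := by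
  rw [bform_apply, bform_apply, ← tr2_sq (∑ i, x i * y i ^ 2)]
  congr 1
  rw [sum_pow_char]
  refine Finset.sum_congr rfl fun i _ => ?_
  rw [mul_pow, ← pow_mul]
  norm_num
  rw [pow4]
  ring

lemma bform_refl {n : ℕ} : (bform n).IsRefl := fun x y h => by
  rw [bform_symm]; exact h

lemma bform_nondeg {n : ℕ} : (bform n).Nondegenerate := by
  suffices hL : ∀ x : Fin n → F4, (∀ y, bform n x y = 0) → x = 0 from
    ⟨hL, fun y hy => hL y fun x => by rw [bform_symm]; exact hy x⟩
  intro x hx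
  funext i
  classical
  by_contra hxi
  obtain ⟨g, hg⟩ := exists_tr_ne
  have h1 := hx (Pi.single i (((x i)⁻¹ * g) ^ 2))
  rw [bform_apply] at h1
  rw [Finset.sum_eq_single i (fun j _ hj => by rw [Pi.single_eq_of_ne hj]; ring)
      (fun h => absurd (Finset.mem_univ i) h)] at h1
  rw [Pi.single_eq_same, ← pow_mul] at h1
  norm_num at h1
  rw [pow4, ← mul_assoc, mul_inv_cancel₀ hxi, one_mul] at h1
  exact hg (tr2_eq_zero_iff.mp h1)

lemma key_identity {m : ℕ} (a : Fin (m+1) → F4) (ha : IsBinVec a)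
    (x y : Fin (m+1) → F4) :
    ∑ i, rightShift a x i * y i ^ 2 = ∑ i, x i * (seqShift a y i) ^ 2 := by
  classical
  have hfrob : (∑ j, a j * y j) ^ 2 = ∑ j, a j * y j ^ 2 := by
    rw [sum_pow_char]
    refine Finset.sum_congr rfl fun j _ => ?_
    rw [mul_pow]
    rcases ha j with h | h <;> rw [h] <;> ring
  have hL : ∑ i, rightShift a x i * y i ^ 2
      = (∑ i : Fin (m+1),
          (if (i : ℕ) = 0 then 0
            else x ⟨(i : ℕ) - 1, lt_of_le_of_lt (Nat.sub_le _ _) i.isLt⟩) * y i ^ 2)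
        + x (Fin.last m) * ∑ i, a i * y i ^ 2 := by
    rw [Finset.mul_sum, ← Finset.sum_add_distrib]
    refine Finset.sum_congr rfl fun i _ => ?_
    have : (⟨m + 1 - 1, Nat.sub_lt i.pos Nat.one_pos⟩ : Fin (m+1)) = Fin.last m := rfl
    simp only [rightShift, this]
    ring
  rw [hL, Fin.sum_univ_succ, Fin.sum_univ_castSucc (f := fun i => x i * (seqShift a y i) ^ 2)]
  have h0 : ((0 : Fin (m+1)) : ℕ) = 0 := rfl
  rw [if_pos h0, zero_mul, zero_add]
  congr 1
  · refine Finset.sum_congr rfl fun j _ => ?_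
    have h1 : ((Fin.succ j : Fin (m+1)) : ℕ) ≠ 0 := Nat.succ_ne_zero _
    rw [if_neg h1]
    have h2 : (⟨((Fin.succ j : Fin (m+1)) : ℕ) - 1,
        lt_of_le_of_lt (Nat.sub_le _ _) (Fin.succ j).isLt⟩ : Fin (m+1)) = Fin.castSucc j := by
      apply Fin.ext; simp
    rw [h2]
    have h3 : seqShift a y (Fin.castSucc j) = y (Fin.succ j) := by
      simp only [seqShift]
      rw [dif_pos (by simp [Fin.is_lt] : ((Fin.castSucc j : Fin (m+1)) : ℕ) + 1 < m + 1)]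
      all_goals exact congrArg y (Fin.ext (by simp))
    rw [h3]
  · have h4 : seqShift a y (Fin.last m) = ∑ j, a j * y j := by
      simp only [seqShift]
      rw [dif_neg (by simp)]
    rw [h4, hfrob]


lemma mem_dual_iff {n : ℕ} (C : AddSubgroup (Fin n → F4)) (y : Fin n → F4) :
    y ∈ (bform n).orthogonal (AddSubgroup.toZModSubmodule 2 C) ↔ y ∈ traceDual C := by
  rw [LinearMap.BilinForm.mem_orthogonal_iff]
  constructor
  · intro h x hx
    have := h x (by simpa using hx)
    rw [bform_apply] at this
    exact tr2_eq_zero_iff.mp this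
  · intro h x hx
    rw [bform_apply]
    exact tr2_eq_zero_iff.mpr (h x (by simpa using hx))

/-- `C` is an additive right polycyclic code induced by the
binary vector `a` iff its trace dual `C^⊥` is an additive sequential code
induced by `a`. -/
theorem stmt_17 (n : ℕ) (hn : 0 < n) (a : Fin n → F4) (ha : IsBinVec a)
    (C : AddSubgroup (Fin n → F4)) :
    IsRightPolycyclic a C ↔ ∀ c ∈ traceDual C, seqShift a c ∈ traceDual C := by
  obtain ⟨m, rfl⟩ : ∃ m, n = m + 1 := ⟨n - 1, (Nat.succ_pred_eq_of_pos hn).symm⟩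
  constructor
  · intro hpc y hy x hx
    have hk := key_identity a ha x y
    rw [← hk]
    exact hy (rightShift a x) (hpc x hx)
  · intro hseq c hc
    set C' := AddSubgroup.toZModSubmodule 2 C with hC'
    have hCC : (bform (m+1)).orthogonal ((bform (m+1)).orthogonal C') = C' :=
      LinearMap.BilinForm.orthogonal_orthogonal bform_nondeg bform_refl C'
    have hmem : rightShift a c ∈ (bform (m+1)).orthogonal ((bform (m+1)).orthogonal C') := by
      rw [LinearMap.BilinForm.mem_orthogonal_iff]
      intro y hy
      rw [← bform_symm, bform_apply,
        key_identity a ha c y, ← bform_apply]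
      have hyD : seqShift a y ∈ traceDual C := hseq y ((mem_dual_iff C y).mp hy)
      rw [bform_apply]
      exact tr2_eq_zero_iff.mpr (hyD c hc)
    rw [hCC] at hmem
    simpa [hC'] using hmem

end
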